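/- Let μ₁ be the smallest eigenvalue of E[P]. For every ω ∈ [0, 2] and every vector ε ∈ ℝⁿ, (1/m)·∑ᵢ ‖(I − ωPᵢ)ε‖² ≤ B(ω)·‖ε‖², where B(ω) := 1 − ω(2 − ω)·μ₁ (the B-bound). -/

import Mathlib

open Matrix

lemma quad_lb {n : ℕ} (A : Matrix (Fin n) (Fin n) ℝ) (hAT : Aᵀ = A)
    (μ : ℝ) (hμ : ∀ r ∈ {r : ℝ | ∃ v : Fin n → ℝ, v ≠ 0 ∧ A.mulVec v = r • v}, μ ≤ r)
    (x : Fin n → ℝ) : μ * (x ⬝ᵥ x) ≤ x ⬝ᵥ (A *ᵥ x) := by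
  have hA : A.IsHermitian := by
    rw [Matrix.IsHermitian, conjTranspose]
    ext i j
    have := congrFun (congrFun hAT i) j
    simpa using this
  set b := hA.eigenvectorBasis with hb
  set lam := hA.eigenvalues with hlam
  have hle : ∀ j, μ ≤ lam j := fun j =>
    hμ _ ⟨⇑(b j), (by simpa using b.orthonormal.ne_zero j), hA.mulVec_eigenvectorBasis j⟩
  have key1 := b.sum_inner_mul_inner ((WithLp.equiv 2 _).symm x) ((WithLp.equiv 2 _).symm x)
  have key2 := b.sum_inner_mul_inner ((WithLp.equiv 2 _).symm x) ((WithLp.equiv 2 _).symm (A *ᵥ x))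
  simp only [PiLp.inner_apply, RCLike.inner_apply', starRingEnd_apply, star_trivial,
    WithLp.equiv_symm_apply] at key1 key2
  have hcomm : ∀ j, (∑ i, (b j) i * x i) = ∑ i, x i * (b j) i :=
    fun j => Finset.sum_congr rfl fun i _ => mul_comm _ _
  have hbdot : ∀ j, (∑ i, (b j) i * (A *ᵥ x) i) = lam j * ∑ i, x i * (b j) i := by
    intro j
    have h0 : (fun i => (b j) i) ⬝ᵥ (A *ᵥ x) = lam j * ∑ i, x i * (b j) i := by
      rw [dotProduct_mulVec, ← hAT, vecMul_transpose,
        show (A *ᵥ fun i => (b j) i) = lam j • fun i => (b j) i from hA.mulVec_eigenvectorBasis j]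
      simp only [smul_dotProduct, smul_eq_mul, dotProduct, Pi.smul_apply, Finset.mul_sum]
      exact Finset.sum_congr rfl fun i _ => by ring
    simpa [dotProduct] using h0
  have h1 : x ⬝ᵥ x = ∑ j, (∑ i, x i * (b j) i) ^ 2 := by
    simp only [dotProduct, ← key1]
    exact Finset.sum_congr rfl fun j _ => by rw [hcomm j]; ring
  have h2 : x ⬝ᵥ (A *ᵥ x) = ∑ j, lam j * (∑ i, x i * (b j) i) ^ 2 := by
    simp only [dotProduct, ← key2]
    exact Finset.sum_congr rfl fun j _ => by rw [hbdot j]; ring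
  rw [h1, h2, Finset.mul_sum]
  exact Finset.sum_le_sum fun j _ => mul_le_mul_of_nonneg_right (hle j) (sq_nonneg _)

/-- **the B-bound, one step.** Let `μ₁` be the smallest eigenvalue of
`E[P] := (1/m)∑ᵢ Pᵢ`. For every `ω ∈ [0, 2]` and every `ε ∈ ℝⁿ`,
`(1/m)·∑ᵢ ‖(I − ωPᵢ)ε‖² ≤ B(ω)·‖ε‖²` where `B(ω) := 1 − ω(2 − ω)·μ₁`. -/
theorem stmt_3 {n m : ℕ} (hm : 0 < m)
    (P : Fin m → Matrix (Fin n) (Fin n) ℝ)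
    (hPsym : ∀ i, (P i)ᵀ = P i) (hPproj : ∀ i, P i * P i = P i)
    (EP : Matrix (Fin n) (Fin n) ℝ) (hEP : EP = (1 / (m : ℝ)) • ∑ i, P i)
    (μ₁ : ℝ)
    (hμ₁ : IsLeast {r : ℝ | ∃ v : Fin n → ℝ, v ≠ 0 ∧ EP.mulVec v = r • v} μ₁)
    (ω : ℝ) (hω : ω ∈ Set.Icc (0 : ℝ) 2) (ε : Fin n → ℝ) :
    (1 / (m : ℝ)) * ∑ i, ((1 - ω • P i).mulVec ε) ⬝ᵥ ((1 - ω • P i).mulVec ε)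
      ≤ (1 - ω * (2 - ω) * μ₁) * (ε ⬝ᵥ ε) := by
  have hmR : (0 : ℝ) < (m : ℝ) := by exact_mod_cast hm
  set c : ℝ := ω * (2 - ω) with hc
  have hc0 : 0 ≤ c := mul_nonneg hω.1 (by linarith [hω.2])
  set q : ℝ := ε ⬝ᵥ ε with hq
  -- per-term identity
  have hterm : ∀ i, ((1 - ω • P i).mulVec ε) ⬝ᵥ ((1 - ω • P i).mulVec ε)
      = q - c * (ε ⬝ᵥ (P i *ᵥ ε)) := by
    intro i
    have hmv : (1 - ω • P i) *ᵥ ε = ε - ω • (P i *ᵥ ε) := by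
      rw [sub_mulVec, one_mulVec, smul_mulVec]
    have hPP : (P i *ᵥ ε) ⬝ᵥ (P i *ᵥ ε) = ε ⬝ᵥ (P i *ᵥ ε) := by
      rw [dotProduct_mulVec, vecMul_mulVec, hPsym i, hPproj i, ← mulVec_transpose,
        hPsym i, dotProduct_comm]
    have hcom : (P i *ᵥ ε) ⬝ᵥ ε = ε ⬝ᵥ (P i *ᵥ ε) := dotProduct_comm _ _
    rw [hmv]
    simp only [sub_dotProduct, dotProduct_sub, smul_dotProduct, dotProduct_smul,
      smul_eq_mul, hPP, hcom, ← hq]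
    ring
  have hms : (∑ i, P i) *ᵥ ε = ∑ i, (P i *ᵥ ε) := by
    ext k
    simp only [mulVec, dotProduct, Finset.sum_apply, Matrix.sum_apply, Finset.sum_mul]
    exact Finset.sum_comm
  have hdsum : ∑ i, ε ⬝ᵥ (P i *ᵥ ε) = ε ⬝ᵥ ((∑ i, P i) *ᵥ ε) := by
    rw [hms]
    simp only [dotProduct, Finset.sum_apply, Finset.mul_sum]
    exact Finset.sum_comm
  -- sum
  have hsum : ∑ i, ((1 - ω • P i).mulVec ε) ⬝ᵥ ((1 - ω • P i).mulVec ε)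
      = (m : ℝ) * q - c * (ε ⬝ᵥ ((∑ i, P i) *ᵥ ε)) := by
    rw [Finset.sum_congr rfl fun i _ => hterm i, Finset.sum_sub_distrib]
    simp only [Finset.sum_const, Finset.card_univ, Fintype.card_fin, nsmul_eq_mul,
      ← Finset.mul_sum, hdsum]
  have hEPq : ε ⬝ᵥ (EP *ᵥ ε) = (1 / (m : ℝ)) * (ε ⬝ᵥ ((∑ i, P i) *ᵥ ε)) := by
    rw [hEP, smul_mulVec, dotProduct_smul, smul_eq_mul]
  have hEPsym : EPᵀ = EP := by
    rw [hEP, transpose_smul, transpose_sum]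
    congr 1
    exact Finset.sum_congr rfl fun i _ => hPsym i
  have hquad : μ₁ * q ≤ ε ⬝ᵥ (EP *ᵥ ε) := quad_lb EP hEPsym μ₁ hμ₁.2 ε
  have hrw : (1 / (m : ℝ)) * ((m : ℝ) * q - c * (ε ⬝ᵥ ((∑ i, P i) *ᵥ ε)))
      = q - c * (ε ⬝ᵥ (EP *ᵥ ε)) := by
    rw [hEPq]; field_simp
  rw [hsum, hrw]
  have : c * (μ₁ * q) ≤ c * (ε ⬝ᵥ (EP *ᵥ ε)) := mul_le_mul_of_nonneg_left hquad hc0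
  nlinarith [this]
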